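/- Let V₁ and V₂ be isometries defining irreducible quantum Markov chains with the same environment dimension k and system dimensions d₁ and d₂, with stationary states ρ₁ˢˢ, ρ₂ˢˢ. Then the following are equivalent: (i) stationary output equivalence: for every n ≥ 1 and all words i, j of length n, tr(K_{1,i} ρ₁ˢˢ K_{1,j}ᴴ) = tr(K_{2,i} ρ₂ˢˢ K_{2,j}ᴴ); (ii) weak output equivalence: there exist states ρ₁ on ℂ^{d₁} and ρ₂ on ℂ^{d₂} such that for every n ≥ 1 and all words i, j of length n, tr(K_{1,i} ρ₁ K_{1,j}ᴴ) = tr(K_{2,i} ρ₂ K_{2,j}ᴴ); (iii) macroscopic output equivalence: for every k₀ ≥ 1 and every Hermitian k^{k₀}×k^{k₀} matrix Q, one has m_{V₁}(Q) = m_{V₂}(Q) and σ²_{V₁}(Q) = σ²_{V₂}(Q). -/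

import Mathlib

open Matrix Filter
open scoped Kronecker ComplexConjugate ComplexOrder

noncomputable section

namespace QMCPaper

/-- The `j`-th block (Kraus operator style) of a `(d₁·k)×d₂` matrix. -/
def blk {d₁ d₂ k : ℕ} (V : Matrix (Fin d₁ × Fin k) (Fin d₂) ℂ) (j : Fin k) :
    Matrix (Fin d₁) (Fin d₂) ℂ :=
  fun a b => V (a, j) b

/-- The Kraus operators of a QMC isometry. -/
def kraus {d k : ℕ} (V : Matrix (Fin d × Fin k) (Fin d) ℂ) (j : Fin k) :
    Matrix (Fin d) (Fin d) ℂ :=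
  blk V j

/-- The transition channel `T_V(X) = Vᴴ (X ⊗ 1_k) V = Σ_j K_jᴴ X K_j`. -/
def chan {d k : ℕ} (V : Matrix (Fin d × Fin k) (Fin d) ℂ)
    (X : Matrix (Fin d) (Fin d) ℂ) : Matrix (Fin d) (Fin d) ℂ :=
  ∑ j : Fin k, (kraus V j)ᴴ * X * kraus V j

/-- The predual channel `T_{V*}(ρ) = Σ_j K_j ρ K_jᴴ`. -/
def predual {d k : ℕ} (V : Matrix (Fin d × Fin k) (Fin d) ℂ)
    (ρ : Matrix (Fin d) (Fin d) ℂ) : Matrix (Fin d) (Fin d) ℂ :=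
  ∑ j : Fin k, kraus V j * ρ * (kraus V j)ᴴ

/-- A state: positive semidefinite matrix of trace one. -/
def IsState {d : ℕ} (ρ : Matrix (Fin d) (Fin d) ℂ) : Prop :=
  ρ.PosSemidef ∧ ρ.trace = 1

/-- `V` is an isometry defining an irreducible QMC with (unique, faithful) stationary
state `ρss`. -/
def IsIrreducible {d k : ℕ} (V : Matrix (Fin d × Fin k) (Fin d) ℂ)
    (ρss : Matrix (Fin d) (Fin d) ℂ) : Prop :=
  Vᴴ * V = 1 ∧ IsState ρss ∧ predual V ρss = ρss ∧ ρss.PosDef ∧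
    ∀ ρ, IsState ρ → predual V ρ = ρ → ρ = ρss

/-- For a word `i = (i_0, …, i_{n-1})`, the operator `K_i = K_{i_{n-1}} ⋯ K_{i_0}`. -/
def krausWord {d k : ℕ} (V : Matrix (Fin d × Fin k) (Fin d) ℂ) {n : ℕ}
    (i : Fin n → Fin k) : Matrix (Fin d) (Fin d) ℂ :=
  ((List.ofFn i).reverse.map (kraus V)).prod

/-- The output state at time `n` with initial system state `ρ`:
its `(i,j)` entry is `tr(K_i ρ K_jᴴ)`. -/
def outState {d k : ℕ} (V : Matrix (Fin d × Fin k) (Fin d) ℂ)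
    (ρ : Matrix (Fin d) (Fin d) ℂ) (n : ℕ) :
    Matrix (Fin n → Fin k) (Fin n → Fin k) ℂ :=
  fun i j => (krausWord V i * ρ * (krausWord V j)ᴴ).trace

/-- Output equivalence (with given initial states): equality of all output states. -/
def OutputEquiv {d₁ d₂ k : ℕ}
    (V₁ : Matrix (Fin d₁ × Fin k) (Fin d₁) ℂ) (ρ₁ : Matrix (Fin d₁) (Fin d₁) ℂ)
    (V₂ : Matrix (Fin d₂ × Fin k) (Fin d₂) ℂ) (ρ₂ : Matrix (Fin d₂) (Fin d₂) ℂ) : Prop :=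
  ∀ n : ℕ, 1 ≤ n → ∀ i j : Fin n → Fin k,
    (krausWord V₁ i * ρ₁ * (krausWord V₁ j)ᴴ).trace =
      (krausWord V₂ i * ρ₂ * (krausWord V₂ j)ᴴ).trace

/-- A (possibly rectangular) unitary matrix. -/
def IsUnitaryMat {d₁ d₂ : ℕ} (W : Matrix (Fin d₁) (Fin d₂) ℂ) : Prop :=
  Wᴴ * W = 1 ∧ W * Wᴴ = 1

end QMCPaper

namespace QMCPaper

/-- The local observable `Q^{(l)}` (with `l` counted from `0`):
`Q` acting on the `k₀` output sites `l, …, l+k₀−1` of a chain of `n` sites,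
and the identity elsewhere. -/
def localObs {k k₀ : ℕ} (Q : Matrix (Fin k₀ → Fin k) (Fin k₀ → Fin k) ℂ)
    (n l : ℕ) : Matrix (Fin n → Fin k) (Fin n → Fin k) ℂ :=
  fun x y =>
    (if h : l + k₀ ≤ n then
        Q (fun j => x ⟨l + (j : ℕ), by have := j.isLt; omega⟩)
          (fun j => y ⟨l + (j : ℕ), by have := j.isLt; omega⟩)
      else 0) *
    ∏ j : Fin n, if l ≤ (j : ℕ) ∧ (j : ℕ) < l + k₀ then 1
      else (if x j = y j then 1 else 0)

/-- The stationary mean `m_V(Q) = tr(ρ_V^out(k₀) Q)`. -/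
def statMean {d k k₀ : ℕ} (V : Matrix (Fin d × Fin k) (Fin d) ℂ)
    (ρss : Matrix (Fin d) (Fin d) ℂ)
    (Q : Matrix (Fin k₀ → Fin k) (Fin k₀ → Fin k) ℂ) : ℂ :=
  (outState V ρss k₀ * Q).trace

/-- The stationary correlations `c_{l,V}(Q)`. -/
def statCorr {d k k₀ : ℕ} (V : Matrix (Fin d × Fin k) (Fin d) ℂ)
    (ρss : Matrix (Fin d) (Fin d) ℂ)
    (Q : Matrix (Fin k₀ → Fin k) (Fin k₀ → Fin k) ℂ) (l : ℕ) : ℂ :=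
  if l = 0 then
    (outState V ρss k₀ * (Q - statMean V ρss Q • 1) ^ 2).trace
  else
    (outState V ρss (k₀ + l) *
      ((2 : ℂ)⁻¹ •
        ((localObs Q (k₀ + l) 0 - statMean V ρss Q • 1) *
            (localObs Q (k₀ + l) l - statMean V ρss Q • 1) +
          (localObs Q (k₀ + l) l - statMean V ρss Q • 1) *
            (localObs Q (k₀ + l) 0 - statMean V ρss Q • 1)))).trace

/-- The asymptotic variance `σ²_V(Q) = c_{0,V}(Q) + 2 Σ_{l≥1} c_{l,V}(Q)`. -/
def asympVar {d k k₀ : ℕ} (V : Matrix (Fin d × Fin k) (Fin d) ℂ)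
    (ρss : Matrix (Fin d) (Fin d) ℂ)
    (Q : Matrix (Fin k₀ → Fin k) (Fin k₀ → Fin k) ℂ) : ℂ :=
  statCorr V ρss Q 0 + 2 * ∑' l : ℕ, statCorr V ρss Q (l + 1)

section Aux
variable {d d₁ d₂ k : ℕ}

lemma sum_kraus_conjT_mul (V : Matrix (Fin d × Fin k) (Fin d) ℂ) (hV : Vᴴ * V = 1) :
    ∑ j : Fin k, (kraus V j)ᴴ * kraus V j = 1 := by
  rw [← hV]
  ext b b'
  simp only [Matrix.sum_apply, Matrix.mul_apply, Matrix.conjTranspose_apply, kraus, blk]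
  rw [Fintype.sum_prod_type]
  exact Finset.sum_comm

lemma trace_predual (V : Matrix (Fin d × Fin k) (Fin d) ℂ) (hV : Vᴴ * V = 1)
    (ρ : Matrix (Fin d) (Fin d) ℂ) : (predual V ρ).trace = ρ.trace := by
  unfold predual
  rw [Matrix.trace_sum]
  have h1 : ∀ j : Fin k, (kraus V j * ρ * (kraus V j)ᴴ).trace
      = ((kraus V j)ᴴ * kraus V j * ρ).trace := fun j => Matrix.trace_mul_cycle _ _ _
  rw [Finset.sum_congr rfl fun j _ => h1 j, ← Matrix.trace_sum, ← Finset.sum_mul,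
    sum_kraus_conjT_mul V hV, one_mul]

lemma posSemidef_predual (V : Matrix (Fin d × Fin k) (Fin d) ℂ)
    {ρ : Matrix (Fin d) (Fin d) ℂ} (hρ : ρ.PosSemidef) : (predual V ρ).PosSemidef := by
  unfold predual
  refine Finset.sum_induction _ _ (fun a b ha hb => ha.add hb) Matrix.PosSemidef.zero ?_
  exact fun j _ => hρ.mul_mul_conjTranspose_same _

lemma isState_predual (V : Matrix (Fin d × Fin k) (Fin d) ℂ) (hV : Vᴴ * V = 1)
    {ρ : Matrix (Fin d) (Fin d) ℂ} (hρ : IsState ρ) : IsState (predual V ρ) :=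
  ⟨posSemidef_predual V hρ.1, by rw [trace_predual V hV, hρ.2]⟩

end Aux
section Aux2
variable {d d₁ d₂ k : ℕ}

lemma diag_nonneg' {ρ : Matrix (Fin d) (Fin d) ℂ} (hρ : ρ.PosSemidef) (a : Fin d) :
    0 ≤ ρ a a := by
  have := hρ.dotProduct_mulVec_nonneg (Pi.single a 1)
  simpa [dotProduct, Pi.single_apply, apply_ite, Finset.sum_ite_eq'] using this

lemma quadform_single {ρ : Matrix (Fin d) (Fin d) ℂ} (i j : Fin d) (hij : i ≠ j) (a b : ℂ) :
    dotProduct (star (Pi.single i a + Pi.single j b)) (ρ *ᵥ (Pi.single i a + Pi.single j b))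
      = starRingEnd ℂ a * (ρ i i * a + ρ i j * b) + starRingEnd ℂ b * (ρ j i * a + ρ j j * b) := by
  have hs : ∀ (p : Fin d) (c : ℂ), star (Pi.single p c : Fin d → ℂ) = Pi.single p (starRingEnd ℂ c) := by
    intro p c; ext q; by_cases h : q = p <;> simp [h, Pi.single_apply]
  rw [star_add, hs i a, hs j b, Matrix.mulVec_add, add_dotProduct, dotProduct_add, dotProduct_add]
  simp only [single_dotProduct, Matrix.mulVec_single, Pi.smul_apply, Matrix.col_apply,
    MulOpposite.smul_eq_mul_unop, MulOpposite.unop_op]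
  ring

lemma entry_norm_le_one {ρ : Matrix (Fin d) (Fin d) ℂ} (hρ : IsState ρ)
    (i j : Fin d) : ‖ρ i j‖ ≤ 1 := by
  have hdiag : ∀ a, 0 ≤ ρ a a := diag_nonneg' hρ.1
  have hre : ∀ a, 0 ≤ (ρ a a).re ∧ (ρ a a).im = 0 := by
    intro a
    have := hdiag a
    rw [Complex.le_def] at this
    exact ⟨this.1, this.2.symm⟩
  have hsum_re : ∑ a, (ρ a a).re = 1 := by
    have := congrArg Complex.re hρ.2
    simpa [Matrix.trace, Matrix.diag, Complex.re_sum] using this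
  by_cases hij : i = j
  · subst hij
    have h1 : (ρ i i).re ≤ 1 := by
      rw [← hsum_re]
      exact Finset.single_le_sum (fun a _ => (hre a).1) (Finset.mem_univ i)
    have h2 : ‖ρ i i‖ = (ρ i i).re := by
      have : ρ i i = ((ρ i i).re : ℂ) := by
        rw [Complex.ext_iff]; simp [(hre i).2]
      rw [this]
      simp [Real.norm_of_nonneg (hre i).1, (hre i).1]
    rw [h2]; exact h1
  · set r : ℝ := ‖ρ i j‖ with hr
    rcases eq_or_lt_of_le (norm_nonneg (ρ i j)) with h0 | h0
    · rw [hr, ← h0]; norm_num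
    have hji : ρ j i = starRingEnd ℂ (ρ i j) := by
      have := congrFun (congrFun hρ.1.1 j) i
      simpa [Matrix.conjTranspose_apply] using this.symm
    have hcc : starRingEnd ℂ (ρ i j) * ρ i j = ((r : ℂ))^2 := by
      rw [mul_comm, Complex.mul_conj]
      norm_cast
      rw [Complex.normSq_eq_norm_sq, hr]
    have hq := hρ.1.dotProduct_mulVec_nonneg (Pi.single i (-(ρ i j)) + Pi.single j (r : ℂ))
    rw [quadform_single i j hij] at hq
    have hkey : starRingEnd ℂ (-(ρ i j)) * (ρ i i * (-(ρ i j)) + ρ i j * (r:ℂ))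
        + starRingEnd ℂ ((r:ℂ)) * (ρ j i * (-(ρ i j)) + ρ j j * (r:ℂ))
        = ((r:ℂ))^2 * (ρ i i + ρ j j - 2*(r:ℂ)) := by
      rw [hji, Complex.conj_ofReal, map_neg]
      ring_nf
      linear_combination (ρ i i - 2*(r:ℂ)) * hcc
    rw [hkey, Complex.le_def] at hq
    have hq1 : 0 ≤ (((r:ℂ))^2 * (ρ i i + ρ j j - 2*(r:ℂ))).re := hq.1
    have hre2 : (((r:ℂ))^2 * (ρ i i + ρ j j - 2*(r:ℂ))).re
        = r^2 * ((ρ i i).re + (ρ j j).re - 2*r) := by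
      have : ((r:ℂ))^2 = ((r^2 : ℝ) : ℂ) := by push_cast; ring
      rw [this, Complex.re_ofReal_mul]
      simp
    rw [hre2] at hq1
    have hposr : (0:ℝ) < r^2 := by positivity
    have h3 : 0 ≤ (ρ i i).re + (ρ j j).re - 2*r := nonneg_of_mul_nonneg_right hq1 hposr
    have h4 : (ρ i i).re + (ρ j j).re ≤ 1 := by
      have hsub : ∑ a ∈ ({i, j} : Finset (Fin d)), (ρ a a).re ≤ ∑ a, (ρ a a).re :=
        Finset.sum_le_sum_of_subset_of_nonneg (Finset.subset_univ _) (fun a _ _ => (hre a).1)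
      rw [Finset.sum_pair hij, hsum_re] at hsub
      exact hsub
    nlinarith [h0.le]

end Aux2
section Aux3
variable {d d₁ d₂ k : ℕ}

lemma krausWord_cons (V : Matrix (Fin d × Fin k) (Fin d) ℂ) {n : ℕ} (a : Fin k)
    (i : Fin n → Fin k) :
    krausWord V (Fin.cons a i) = krausWord V i * kraus V a := by
  unfold krausWord
  rw [List.ofFn_succ]
  simp [Fin.cons_succ, Fin.cons_zero]

lemma trace_sandwich_sum {ι : Type*} (s : Finset ι) (A B : Matrix (Fin d) (Fin d) ℂ)
    (f : ι → Matrix (Fin d) (Fin d) ℂ) :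
    (A * (∑ x ∈ s, f x) * B).trace = ∑ x ∈ s, (A * f x * B).trace := by
  rw [Finset.mul_sum, Finset.sum_mul, Matrix.trace_sum]

lemma trace_sandwich_smul (c : ℂ) (A B X : Matrix (Fin d) (Fin d) ℂ) :
    (A * (c • X) * B).trace = c * (A * X * B).trace := by
  rw [Matrix.mul_smul, Matrix.smul_mul, Matrix.trace_smul, smul_eq_mul]

lemma outputEquiv_predual
    {V₁ : Matrix (Fin d₁ × Fin k) (Fin d₁) ℂ} {ρ₁ : Matrix (Fin d₁) (Fin d₁) ℂ}
    {V₂ : Matrix (Fin d₂ × Fin k) (Fin d₂) ℂ} {ρ₂ : Matrix (Fin d₂) (Fin d₂) ℂ}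
    (h : OutputEquiv V₁ ρ₁ V₂ ρ₂) :
    OutputEquiv V₁ (predual V₁ ρ₁) V₂ (predual V₂ ρ₂) := by
  intro n hn i j
  have expand : ∀ (d' : ℕ) (V : Matrix (Fin d' × Fin k) (Fin d') ℂ)
      (ρ : Matrix (Fin d') (Fin d') ℂ),
      (krausWord V i * predual V ρ * (krausWord V j)ᴴ).trace
        = ∑ a : Fin k, (krausWord V (Fin.cons a i) * ρ * (krausWord V (Fin.cons a j))ᴴ).trace := by
    intro d' V ρ
    unfold predual
    rw [trace_sandwich_sum]
    exact Finset.sum_congr rfl fun a _ => by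
      rw [krausWord_cons, krausWord_cons, Matrix.conjTranspose_mul]
      simp only [Matrix.mul_assoc]
  rw [expand d₁ V₁ ρ₁, expand d₂ V₂ ρ₂]
  exact Finset.sum_congr rfl fun a _ => h (n+1) (by omega) (Fin.cons a i) (Fin.cons a j)

lemma outputEquiv_iterate
    {V₁ : Matrix (Fin d₁ × Fin k) (Fin d₁) ℂ} {ρ₁ : Matrix (Fin d₁) (Fin d₁) ℂ}
    {V₂ : Matrix (Fin d₂ × Fin k) (Fin d₂) ℂ} {ρ₂ : Matrix (Fin d₂) (Fin d₂) ℂ}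
    (h : OutputEquiv V₁ ρ₁ V₂ ρ₂) (m : ℕ) :
    OutputEquiv V₁ ((predual V₁)^[m] ρ₁) V₂ ((predual V₂)^[m] ρ₂) := by
  induction m with
  | zero => exact h
  | succ m ih =>
    rw [Function.iterate_succ_apply', Function.iterate_succ_apply']
    exact outputEquiv_predual ih

end Aux3
section Aux4
variable {d d₁ d₂ k : ℕ}

def cesaro (V : Matrix (Fin d × Fin k) (Fin d) ℂ) (ρ : Matrix (Fin d) (Fin d) ℂ) (N : ℕ) :
    Matrix (Fin d) (Fin d) ℂ :=
  ((N : ℂ))⁻¹ • ∑ m ∈ Finset.range N, (predual V)^[m] ρ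

lemma isState_iterate (V : Matrix (Fin d × Fin k) (Fin d) ℂ) (hV : Vᴴ * V = 1)
    {ρ : Matrix (Fin d) (Fin d) ℂ} (hρ : IsState ρ) (m : ℕ) :
    IsState ((predual V)^[m] ρ) := by
  induction m with
  | zero => exact hρ
  | succ m ih =>
    rw [Function.iterate_succ_apply']
    exact isState_predual V hV ih

lemma posSemidef_nnsmul {M : Matrix (Fin d) (Fin d) ℂ} (hM : M.PosSemidef) {c : ℝ}
    (hc : 0 ≤ c) : ((c : ℂ) • M).PosSemidef := by
  refine Matrix.PosSemidef.of_dotProduct_mulVec_nonneg ?_ ?_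
  · unfold Matrix.IsHermitian
    rw [Matrix.conjTranspose_smul, hM.1.eq]
    congr 1
    simp [Complex.conj_ofReal]
  · intro x
    rw [Matrix.smul_mulVec, dotProduct_smul, smul_eq_mul]
    refine mul_nonneg ?_ (hM.dotProduct_mulVec_nonneg x)
    exact_mod_cast Complex.zero_le_real.mpr hc

lemma isState_cesaro (V : Matrix (Fin d × Fin k) (Fin d) ℂ) (hV : Vᴴ * V = 1)
    {ρ : Matrix (Fin d) (Fin d) ℂ} (hρ : IsState ρ) (N : ℕ) (hN : 1 ≤ N) :
    IsState (cesaro V ρ N) := by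
  have hNC : ((N : ℂ)) ≠ 0 := by exact_mod_cast Nat.one_le_iff_ne_zero.mp hN
  constructor
  · have : ((N : ℂ))⁻¹ = (((N : ℝ)⁻¹ : ℝ) : ℂ) := by push_cast; ring
    rw [cesaro, this]
    refine posSemidef_nnsmul ?_ (by positivity)
    refine Finset.sum_induction _ _ (fun a b ha hb => ha.add hb) Matrix.PosSemidef.zero ?_
    exact fun m _ => (isState_iterate V hV hρ m).1
  · rw [cesaro, Matrix.trace_smul, Matrix.trace_sum]
    have : ∀ m ∈ Finset.range N, ((predual V)^[m] ρ).trace = 1 :=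
      fun m _ => (isState_iterate V hV hρ m).2
    rw [Finset.sum_congr rfl this]
    simp [hNC]

lemma predual_smul (V : Matrix (Fin d × Fin k) (Fin d) ℂ) (c : ℂ)
    (X : Matrix (Fin d) (Fin d) ℂ) : predual V (c • X) = c • predual V X := by
  simp [predual, Matrix.mul_smul, Matrix.smul_mul, Finset.smul_sum]

lemma predual_sum (V : Matrix (Fin d × Fin k) (Fin d) ℂ) {ι : Type*} (s : Finset ι)
    (f : ι → Matrix (Fin d) (Fin d) ℂ) :
    predual V (∑ x ∈ s, f x) = ∑ x ∈ s, predual V (f x) := by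
  simp only [predual, Finset.mul_sum, Finset.sum_mul]
  exact Finset.sum_comm

lemma predual_cesaro_sub (V : Matrix (Fin d × Fin k) (Fin d) ℂ)
    (ρ : Matrix (Fin d) (Fin d) ℂ) (N : ℕ) :
    predual V (cesaro V ρ N) - cesaro V ρ N = ((N : ℂ))⁻¹ • ((predual V)^[N] ρ - ρ) := by
  rw [cesaro, predual_smul, predual_sum, ← smul_sub]
  congr 1
  have h1 : ∀ m, predual V ((predual V)^[m] ρ) = (predual V)^[m+1] ρ := by
    intro m; rw [Function.iterate_succ_apply']
  rw [Finset.sum_congr rfl fun m _ => h1 m]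
  have h2 : ∑ m ∈ Finset.range N, (predual V)^[m+1] ρ
      = (∑ m ∈ Finset.range N, (predual V)^[m] ρ) + (predual V)^[N] ρ - ρ := by
    have := Finset.sum_range_succ' (fun m => (predual V)^[m] ρ) N
    rw [Finset.sum_range_succ] at this
    rw [Function.iterate_zero_apply] at this
    rw [eq_sub_iff_add_eq, ← this]
  rw [h2]
  abel

end Aux4
section Aux5
variable {d d₁ d₂ k : ℕ}

instance matFCT {d : ℕ} : FirstCountableTopology (Matrix (Fin d) (Fin d) ℂ) :=
  inferInstanceAs (FirstCountableTopology (Fin d → Fin d → ℂ))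

lemma complex_nonneg_of_tendsto {f : ℕ → ℂ} {z : ℂ}
    (h : Filter.Tendsto f Filter.atTop (nhds z)) (h0 : ∀ n, 0 ≤ f n) : 0 ≤ z := by
  rw [Complex.le_def]
  constructor
  · have hre : Filter.Tendsto (fun n => (f n).re) Filter.atTop (nhds z.re) :=
      (Complex.continuous_re.tendsto z).comp h
    have hge : ∀ n, (0:ℝ) ≤ (f n).re := fun n => ((Complex.le_def).mp (h0 n)).1
    simpa using ge_of_tendsto' hre hge
  · have him : Filter.Tendsto (fun n => (f n).im) Filter.atTop (nhds z.im) :=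
      (Complex.continuous_im.tendsto z).comp h
    have heq : (fun n => (f n).im) = fun _ => (0:ℝ) :=
      funext fun n => (((Complex.le_def).mp (h0 n)).2).symm
    rw [heq] at him
    simpa using (tendsto_nhds_unique him tendsto_const_nhds).symm

def entryBall (d : ℕ) : Set (Matrix (Fin d) (Fin d) ℂ) :=
  Set.univ.pi fun _ : Fin d => Set.univ.pi fun _ : Fin d => Metric.closedBall (0:ℂ) 1

lemma isCompact_entryBall : IsCompact (entryBall d) :=
  isCompact_univ_pi fun _ => isCompact_univ_pi fun _ => isCompact_closedBall 0 1

lemma continuous_predual (V : Matrix (Fin d × Fin k) (Fin d) ℂ) :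
    Continuous (predual V) := by
  unfold predual
  exact continuous_finset_sum _ fun j _ =>
    (continuous_const.matrix_mul continuous_id).matrix_mul continuous_const

lemma cesaro_tendsto_ss (V : Matrix (Fin d × Fin k) (Fin d) ℂ)
    (ρss : Matrix (Fin d) (Fin d) ℂ) (h : IsIrreducible V ρss)
    {ρ : Matrix (Fin d) (Fin d) ℂ} (hρ : IsState ρ) (u : ℕ → ℕ) (hu : StrictMono u) :
    ∃ φ : ℕ → ℕ, StrictMono φ ∧
      Filter.Tendsto (fun N => cesaro V ρ (u (φ N) + 1)) Filter.atTop (nhds ρss) := by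
  obtain ⟨hV, hss, hfix, hpd, huniq⟩ := h
  set c : ℕ → Matrix (Fin d) (Fin d) ℂ := fun N => cesaro V ρ (u N + 1) with hc
  have hcs : ∀ N, IsState (c N) := fun N => isState_cesaro V hV hρ _ (by omega)
  have hmem : ∀ N, c N ∈ entryBall d := by
    intro N
    show ∀ i ∈ Set.univ, ∀ j ∈ Set.univ, c N i j ∈ Metric.closedBall (0:ℂ) 1
    intro i _ j _
    rw [Metric.mem_closedBall, dist_zero_right]
    exact entry_norm_le_one (hcs N) i j
  obtain ⟨σ, hσmem, φ, hφ, hlim⟩ := isCompact_entryBall.tendsto_subseq hmem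
  -- σ has trace one
  have htrσ : σ.trace = 1 := by
    have h1 : Filter.Tendsto (fun N => (c (φ N)).trace) Filter.atTop (nhds σ.trace) :=
      ((continuous_id.matrix_trace).tendsto σ).comp hlim
    have h2 : (fun N => (c (φ N)).trace) = fun _ => (1:ℂ) := funext fun N => (hcs _).2
    rw [h2] at h1
    exact (tendsto_nhds_unique h1 tendsto_const_nhds).symm ▸ rfl
  -- σ is Hermitian
  have hherm : σ.IsHermitian := by
    have h1 : Filter.Tendsto (fun N => (c (φ N))ᴴ) Filter.atTop (nhds σᴴ) :=
      ((continuous_id.matrix_conjTranspose).tendsto σ).comp hlim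
    have h2 : (fun N => (c (φ N))ᴴ) = fun N => c (φ N) := funext fun N => (hcs _).1.1
    rw [h2] at h1
    exact tendsto_nhds_unique h1 hlim
  -- σ is PSD
  have hpsd : σ.PosSemidef := by
    refine Matrix.PosSemidef.of_dotProduct_mulVec_nonneg hherm fun x => ?_
    have hqc : Continuous fun M : Matrix (Fin d) (Fin d) ℂ =>
        dotProduct (star x) (M *ᵥ x) :=
      continuous_const.dotProduct (continuous_id.matrix_mulVec continuous_const)
    exact complex_nonneg_of_tendsto ((hqc.tendsto σ).comp hlim)
      (fun N => (hcs (φ N)).1.dotProduct_mulVec_nonneg x)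
  -- the difference tendsto zero
  have hdiff : Filter.Tendsto (fun N => predual V (c N) - c N) Filter.atTop (nhds 0) := by
    have heq : ∀ N, predual V (c N) - c N
        = (((u N + 1 : ℕ) : ℂ))⁻¹ • ((predual V)^[u N + 1] ρ - ρ) := by
      intro N
      have := predual_cesaro_sub V ρ (u N + 1)
      simpa using this
    refine tendsto_pi_nhds.mpr fun i => tendsto_pi_nhds.mpr fun j => ?_
    have hbound : ∀ N, ‖(predual V (c N) - c N) i j‖ ≤ 2 / ((u N : ℝ) + 1) := by
      intro N
      rw [heq N]
      have h3 : ((((u N + 1 : ℕ) : ℂ))⁻¹ • ((predual V)^[u N + 1] ρ - ρ)) i j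
          = (((u N + 1 : ℕ) : ℂ))⁻¹ * (((predual V)^[u N + 1] ρ) i j - ρ i j) := by
        simp [Matrix.smul_apply, Matrix.sub_apply]
      rw [h3, norm_mul, norm_inv]
      have h4 : ‖(((u N + 1 : ℕ) : ℂ))‖ = (u N : ℝ) + 1 := by
        rw [Complex.norm_natCast]; push_cast; ring
      rw [h4]
      have h5 : ‖((predual V)^[u N + 1] ρ) i j - ρ i j‖ ≤ 2 := by
        calc ‖((predual V)^[u N + 1] ρ) i j - ρ i j‖
            ≤ ‖((predual V)^[u N + 1] ρ) i j‖ + ‖ρ i j‖ := norm_sub_le _ _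
          _ ≤ 1 + 1 := add_le_add
              (entry_norm_le_one (isState_iterate V hV hρ _) i j)
              (entry_norm_le_one hρ i j)
          _ = 2 := by norm_num
      have h6 : (0:ℝ) < (u N : ℝ) + 1 := by positivity
      rw [div_eq_inv_mul]
      exact mul_le_mul_of_nonneg_left h5 (by positivity)
    have hzero : Filter.Tendsto (fun N => 2 / ((u N : ℝ) + 1)) Filter.atTop (nhds 0) := by
      have hbase : Filter.Tendsto (fun M : ℕ => 2 / ((M : ℝ) + 1)) Filter.atTop (nhds 0) := by
        have h7 := (tendsto_const_div_atTop_nhds_zero_nat (2:ℝ)).comp (tendsto_add_atTop_nat 1)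
        have h8 : ((fun n : ℕ => 2 / (n : ℝ)) ∘ fun a => a + 1)
            = fun M : ℕ => 2 / ((M : ℝ) + 1) := by
          funext M; simp only [Function.comp]; push_cast; ring_nf
        rwa [h8] at h7
      exact hbase.comp hu.tendsto_atTop
    have := squeeze_zero_norm hbound hzero
    refine this.congr' ?_
    rfl
  -- σ is invariant
  have hinv : predual V σ = σ := by
    have h5 : Filter.Tendsto (fun N => predual V (c (φ N))) Filter.atTop
        (nhds (predual V σ)) := ((continuous_predual V).tendsto σ).comp hlim
    have h6 : Filter.Tendsto (fun N => predual V (c (φ N)) - c (φ N)) Filter.atTop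
        (nhds 0) := hdiff.comp hφ.tendsto_atTop
    have h7 : Filter.Tendsto (fun N => predual V (c (φ N)) - c (φ N)) Filter.atTop
        (nhds (predual V σ - σ)) := h5.sub hlim
    have := tendsto_nhds_unique h7 h6
    rwa [sub_eq_zero] at this
  have : σ = ρss := huniq σ ⟨hpsd, htrσ⟩ hinv
  exact ⟨φ, hφ, this ▸ hlim⟩
end Aux5
section Aux6
variable {d d₁ d₂ k : ℕ}

lemma outputEquiv_cesaro
    {V₁ : Matrix (Fin d₁ × Fin k) (Fin d₁) ℂ} {ρ₁ : Matrix (Fin d₁) (Fin d₁) ℂ}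
    {V₂ : Matrix (Fin d₂ × Fin k) (Fin d₂) ℂ} {ρ₂ : Matrix (Fin d₂) (Fin d₂) ℂ}
    (h : OutputEquiv V₁ ρ₁ V₂ ρ₂) (N : ℕ) :
    OutputEquiv V₁ (cesaro V₁ ρ₁ N) V₂ (cesaro V₂ ρ₂ N) := by
  intro n hn i j
  unfold cesaro
  rw [trace_sandwich_smul, trace_sandwich_smul, trace_sandwich_sum, trace_sandwich_sum]
  congr 1
  exact Finset.sum_congr rfl fun m _ => outputEquiv_iterate h m n hn i j

lemma continuous_outfun {d' : ℕ} (V : Matrix (Fin d' × Fin k) (Fin d') ℂ) {n : ℕ}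
    (i j : Fin n → Fin k) :
    Continuous fun ρ : Matrix (Fin d') (Fin d') ℂ =>
      (krausWord V i * ρ * (krausWord V j)ᴴ).trace :=
  ((continuous_const.matrix_mul continuous_id).matrix_mul continuous_const).matrix_trace

lemma weak_to_stationary
    {V₁ : Matrix (Fin d₁ × Fin k) (Fin d₁) ℂ} {ρ₁ss : Matrix (Fin d₁) (Fin d₁) ℂ}
    {V₂ : Matrix (Fin d₂ × Fin k) (Fin d₂) ℂ} {ρ₂ss : Matrix (Fin d₂) (Fin d₂) ℂ}
    (h₁ : IsIrreducible V₁ ρ₁ss) (h₂ : IsIrreducible V₂ ρ₂ss)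
    {ρ₁ : Matrix (Fin d₁) (Fin d₁) ℂ} {ρ₂ : Matrix (Fin d₂) (Fin d₂) ℂ}
    (hρ₁ : IsState ρ₁) (hρ₂ : IsState ρ₂) (hW : OutputEquiv V₁ ρ₁ V₂ ρ₂) :
    OutputEquiv V₁ ρ₁ss V₂ ρ₂ss := by
  obtain ⟨φ₁, hφ₁, hlim₁⟩ := cesaro_tendsto_ss V₁ ρ₁ss h₁ hρ₁ id strictMono_id
  obtain ⟨φ₂, hφ₂, hlim₂⟩ := cesaro_tendsto_ss V₂ ρ₂ss h₂ hρ₂ φ₁ hφ₁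
  have hlim₁' : Filter.Tendsto (fun N => cesaro V₁ ρ₁ (φ₁ (φ₂ N) + 1)) Filter.atTop
      (nhds ρ₁ss) := by
    have := hlim₁.comp hφ₂.tendsto_atTop
    exact this
  intro n hn i j
  have hF₁ : Filter.Tendsto
      (fun N => (krausWord V₁ i * cesaro V₁ ρ₁ (φ₁ (φ₂ N) + 1) * (krausWord V₁ j)ᴴ).trace)
      Filter.atTop (nhds ((krausWord V₁ i * ρ₁ss * (krausWord V₁ j)ᴴ).trace)) :=
    ((continuous_outfun V₁ i j).tendsto ρ₁ss).comp hlim₁'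
  have hF₂ : Filter.Tendsto
      (fun N => (krausWord V₂ i * cesaro V₂ ρ₂ (φ₁ (φ₂ N) + 1) * (krausWord V₂ j)ᴴ).trace)
      Filter.atTop (nhds ((krausWord V₂ i * ρ₂ss * (krausWord V₂ j)ᴴ).trace)) :=
    ((continuous_outfun V₂ i j).tendsto ρ₂ss).comp hlim₂
  have heq : (fun N => (krausWord V₁ i * cesaro V₁ ρ₁ (φ₁ (φ₂ N) + 1) * (krausWord V₁ j)ᴴ).trace)
      = fun N => (krausWord V₂ i * cesaro V₂ ρ₂ (φ₁ (φ₂ N) + 1) * (krausWord V₂ j)ᴴ).trace :=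
    funext fun N => outputEquiv_cesaro hW (φ₁ (φ₂ N) + 1) n hn i j
  rw [heq] at hF₁
  exact tendsto_nhds_unique hF₁ hF₂

end Aux6
section Aux7
variable {d d₁ d₂ k : ℕ}

lemma matrix_eq_of_trace_herm {m : Type*} [Fintype m] [DecidableEq m]
    (A B : Matrix m m ℂ)
    (h : ∀ Q : Matrix m m ℂ, Q.IsHermitian → (A * Q).trace = (B * Q).trace) : A = B := by
  have hall : ∀ Q : Matrix m m ℂ, (A * Q).trace = (B * Q).trace := by
    intro Q
    set H₁ : Matrix m m ℂ := (2:ℂ)⁻¹ • (Q + Qᴴ) with hH₁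
    set H₂ : Matrix m m ℂ := (2 * Complex.I)⁻¹ • (Q - Qᴴ) with hH₂
    have hherm₁ : H₁.IsHermitian := by
      unfold Matrix.IsHermitian
      rw [hH₁, Matrix.conjTranspose_smul, Matrix.conjTranspose_add,
        Matrix.conjTranspose_conjTranspose]
      rw [add_comm Qᴴ Q]
      congr 1
      simp
    have hherm₂ : H₂.IsHermitian := by
      unfold Matrix.IsHermitian
      rw [hH₂, Matrix.conjTranspose_smul, Matrix.conjTranspose_sub,
        Matrix.conjTranspose_conjTranspose]
      have h1 : star ((2 * Complex.I)⁻¹) = -(2 * Complex.I)⁻¹ := by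
        have hs : star (2 * Complex.I) = -(2 * Complex.I) := by
          simp [Complex.star_def]
        rw [star_inv₀, hs, ← neg_inv]
      rw [h1, neg_smul, ← smul_neg, neg_sub]
    have hQ : Q = H₁ + Complex.I • H₂ := by
      rw [hH₁, hH₂, smul_smul]
      have h2 : Complex.I * (2 * Complex.I)⁻¹ = (2:ℂ)⁻¹ := by
        rw [mul_inv, ← mul_assoc, mul_comm Complex.I, mul_assoc,
          mul_inv_cancel₀ Complex.I_ne_zero, mul_one]
      rw [h2, ← smul_add]
      rw [show Q + Qᴴ + (Q - Qᴴ) = 2 • Q by abel]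
      rw [smul_comm, ← smul_assoc]
      norm_num
    calc (A * Q).trace = (A * (H₁ + Complex.I • H₂)).trace := by rw [← hQ]
      _ = (A * H₁).trace + Complex.I * (A * H₂).trace := by
          simp only [Matrix.mul_add, Matrix.trace_add, Matrix.mul_smul, Matrix.trace_smul,
            smul_eq_mul]
      _ = (B * H₁).trace + Complex.I * (B * H₂).trace := by rw [h H₁ hherm₁, h H₂ hherm₂]
      _ = (B * (H₁ + Complex.I • H₂)).trace := by
          simp only [Matrix.mul_add, Matrix.trace_add, Matrix.mul_smul, Matrix.trace_smul,
            smul_eq_mul]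
      _ = (B * Q).trace := by rw [← hQ]
  ext i j
  have := hall (Matrix.single j i 1)
  rw [Matrix.trace, Matrix.trace] at this
  simpa [Matrix.diag, Matrix.mul_apply, Matrix.single, ite_and, eq_comm,
    Finset.sum_ite_eq, Finset.sum_ite_eq'] using this

end Aux7

/-- Proposition: the three notions of output equivalence agree. -/
theorem output_equivalence_notions {d₁ d₂ k : ℕ}
    (V₁ : Matrix (Fin d₁ × Fin k) (Fin d₁) ℂ) (ρ₁ss : Matrix (Fin d₁) (Fin d₁) ℂ)
    (V₂ : Matrix (Fin d₂ × Fin k) (Fin d₂) ℂ) (ρ₂ss : Matrix (Fin d₂) (Fin d₂) ℂ)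
    (h₁ : IsIrreducible V₁ ρ₁ss) (h₂ : IsIrreducible V₂ ρ₂ss) :
    -- (i) ↔ (ii): stationary output equivalence ↔ weak output equivalence
    (OutputEquiv V₁ ρ₁ss V₂ ρ₂ss ↔
      ∃ (ρ₁ : Matrix (Fin d₁) (Fin d₁) ℂ) (ρ₂ : Matrix (Fin d₂) (Fin d₂) ℂ),
        IsState ρ₁ ∧ IsState ρ₂ ∧ OutputEquiv V₁ ρ₁ V₂ ρ₂) ∧
    -- (i) ↔ (iii): stationary output equivalence ↔ macroscopic output equivalence
    (OutputEquiv V₁ ρ₁ss V₂ ρ₂ss ↔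
      ∀ (k₀ : ℕ), 1 ≤ k₀ →
        ∀ Q : Matrix (Fin k₀ → Fin k) (Fin k₀ → Fin k) ℂ, Q.IsHermitian →
          statMean V₁ ρ₁ss Q = statMean V₂ ρ₂ss Q ∧
          asympVar V₁ ρ₁ss Q = asympVar V₂ ρ₂ss Q) := by
  constructor
  · constructor
    · intro h
      exact ⟨ρ₁ss, ρ₂ss, h₁.2.1, h₂.2.1, h⟩
    · rintro ⟨ρ₁, ρ₂, hs1, hs2, hW⟩
      exact weak_to_stationary h₁ h₂ hs1 hs2 hW
  · constructor
    · intro h k₀ hk₀ Q _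
      have hout : ∀ n, 1 ≤ n → outState V₁ ρ₁ss n = outState V₂ ρ₂ss n := by
        intro n hn
        ext i j
        exact h n hn i j
      have hmean : statMean V₁ ρ₁ss Q = statMean V₂ ρ₂ss Q := by
        rw [statMean, statMean, hout k₀ hk₀]
      refine ⟨hmean, ?_⟩
      have hcorr : ∀ l, statCorr V₁ ρ₁ss Q l = statCorr V₂ ρ₂ss Q l := by
        intro l
        rcases Nat.eq_zero_or_pos l with rfl | hl
        · have e1 : statCorr V₁ ρ₁ss Q 0
              = (outState V₁ ρ₁ss k₀ * (Q - statMean V₁ ρ₁ss Q • 1) ^ 2).trace := if_pos rfl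
          have e2 : statCorr V₂ ρ₂ss Q 0
              = (outState V₂ ρ₂ss k₀ * (Q - statMean V₂ ρ₂ss Q • 1) ^ 2).trace := if_pos rfl
          rw [e1, e2, hmean, hout k₀ hk₀]
        · rw [statCorr, statCorr, if_neg (by omega), if_neg (by omega),
            hmean, hout (k₀ + l) (by omega)]
      rw [asympVar, asympVar, hcorr 0]
      congr 2
      exact tsum_congr fun l => hcorr (l + 1)
    · intro h n hn i j
      have h1 : ∀ Q : Matrix (Fin n → Fin k) (Fin n → Fin k) ℂ, Q.IsHermitian →
          (outState V₁ ρ₁ss n * Q).trace = (outState V₂ ρ₂ss n * Q).trace := by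
        intro Q hQ
        have := (h n hn Q hQ).1
        rwa [statMean, statMean] at this
      have hAB := matrix_eq_of_trace_herm _ _ h1
      exact congrFun (congrFun hAB i) j

end QMCPaper
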